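/- Let d : S × S → ℝ_{≥0} on S = [−T,T] × ℝ^{nd} be defined by d((s,x),(t,y)) := ρ(t−s, θ_{t,s}(x) − y), where ρ(u,z) = |u|^{1/2} + Σ_i |z_i|^{1/(2i-1)} and θ is the flow of a Lipschitz vector field F with the cascade structure (F_i depends only on time and coordinates x_{i-1},…,x_n, and F_1 on all coordinates). Then there exists a constant C = C(F, T, n, d) ≥ 1 such that for all (s,x),(t,y),(σ,ξ) ∈ S with d((s,x),(σ,ξ)) ≤ 1 and d((σ,ξ),(t,y)) ≤ 1, one has d((s,x),(t,y)) ≤ C ( d((s,x),(σ,ξ)) + d((σ,ξ),(t,y)) ). -/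

import Mathlib

open scoped BigOperators

/-- Euclidean norm of the i-th d-dimensional block of z ∈ ℝ^{nd}. -/
noncomputable def blockNorm (n d : ℕ) (z : EuclideanSpace ℝ (Fin n × Fin d)) (i : Fin n) : ℝ :=
  Real.sqrt (∑ q : Fin d, (z (i, q)) ^ 2)

/-- The parabolic quasi-norm ρ(u,z) = |u|^{1/2} + Σ_{i=1}^n |z_i|^{1/(2i-1)}. -/
noncomputable def rho (n d : ℕ) (u : ℝ) (z : EuclideanSpace ℝ (Fin n × Fin d)) : ℝ :=
  |u| ^ ((1:ℝ)/2) + ∑ i : Fin n, blockNorm n d z i ^ ((1:ℝ) / (2 * (i:ℕ) + 1))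

abbrev ES (n d : ℕ) := EuclideanSpace ℝ (Fin n × Fin d)

namespace Helper

variable {n d : ℕ}

lemma blockNorm_nonneg (z : EuclideanSpace ℝ (Fin n × Fin d)) (i : Fin n) :
    0 ≤ blockNorm n d z i := Real.sqrt_nonneg _

lemma sqrt_add_le {x y : ℝ} (hx : 0 ≤ x) (hy : 0 ≤ y) :
    Real.sqrt (x + y) ≤ Real.sqrt x + Real.sqrt y := by
  have h1 := Real.sq_sqrt hx
  have h2 := Real.sq_sqrt hy
  have h3 := Real.sqrt_nonneg x
  have h4 := Real.sqrt_nonneg y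
  calc Real.sqrt (x + y) ≤ Real.sqrt ((Real.sqrt x + Real.sqrt y)^2) :=
        Real.sqrt_le_sqrt (by nlinarith)
    _ = Real.sqrt x + Real.sqrt y := Real.sqrt_sq (by positivity)

/-- block as euclidean vector -/
def blockVec (z : EuclideanSpace ℝ (Fin n × Fin d)) (i : Fin n) :
    EuclideanSpace ℝ (Fin d) := WithLp.toLp 2 (fun q => z (i, q))

lemma blockNorm_eq (z : EuclideanSpace ℝ (Fin n × Fin d)) (i : Fin n) :
    blockNorm n d z i = ‖blockVec z i‖ := by
  rw [EuclideanSpace.norm_eq]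
  simp [blockNorm, blockVec, sq_abs]

lemma blockVec_add (z w : EuclideanSpace ℝ (Fin n × Fin d)) (i : Fin n) :
    blockVec (z + w) i = blockVec z i + blockVec w i := by
  ext q; simp [blockVec]

lemma blockNorm_add_le (z w : EuclideanSpace ℝ (Fin n × Fin d)) (i : Fin n) :
    blockNorm n d (z + w) i ≤ blockNorm n d z i + blockNorm n d w i := by
  rw [blockNorm_eq, blockNorm_eq, blockNorm_eq, blockVec_add]
  exact norm_add_le _ _

lemma norm_eq_sqrt_sum_blockNorm_sq (z : EuclideanSpace ℝ (Fin n × Fin d)) :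
    ‖z‖ = Real.sqrt (∑ i : Fin n, (blockNorm n d z i) ^ 2) := by
  rw [EuclideanSpace.norm_eq]
  congr 1
  rw [Fintype.sum_prod_type]
  refine Finset.sum_congr rfl fun i _ => ?_
  rw [blockNorm, Real.sq_sqrt (Finset.sum_nonneg fun q _ => sq_nonneg _)]
  simp [sq_abs]

lemma blockNorm_le_norm (z : EuclideanSpace ℝ (Fin n × Fin d)) (i : Fin n) :
    blockNorm n d z i ≤ ‖z‖ := by
  rw [norm_eq_sqrt_sum_blockNorm_sq]
  refine le_trans ?_ (Real.sqrt_le_sqrt (Finset.single_le_sum (f := fun j => (blockNorm n d z j)^2)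
    (fun j _ => sq_nonneg _) (Finset.mem_univ i)))
  rw [Real.sqrt_sq (blockNorm_nonneg z i)]

lemma sqrt_sum_le_sum_sqrt (s : Finset (Fin n)) (f : Fin n → ℝ) (hf : ∀ i, 0 ≤ f i) :
    Real.sqrt (∑ i ∈ s, f i) ≤ ∑ i ∈ s, Real.sqrt (f i) := by
  classical
  induction s using Finset.induction with
  | empty => simp
  | insert a s' hx ih =>
      rw [Finset.sum_insert hx, Finset.sum_insert hx]
      exact le_trans (sqrt_add_le (hf a) (Finset.sum_nonneg fun i _ => hf i))
        (by linarith)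

/-- If all blocks outside `s` vanish, the norm is at most the sum of block norms over `s`. -/
lemma norm_le_sum_blockNorm (z : EuclideanSpace ℝ (Fin n × Fin d)) (s : Finset (Fin n))
    (hz : ∀ j ∉ s, ∀ q : Fin d, z (j, q) = 0) :
    ‖z‖ ≤ ∑ j ∈ s, blockNorm n d z j := by
  rw [norm_eq_sqrt_sum_blockNorm_sq]
  have h0 : ∀ j ∉ s, (blockNorm n d z j)^2 = 0 := by
    intro j hj
    rw [blockNorm]
    simp [hz j hj]
  rw [← Finset.sum_subset (Finset.subset_univ s) (fun j _ hj => h0 j hj)]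
  refine le_trans (sqrt_sum_le_sum_sqrt s _ (fun i => sq_nonneg _)) ?_
  refine le_of_eq (Finset.sum_congr rfl fun j _ => ?_)
  exact Real.sqrt_sq (blockNorm_nonneg z j)

lemma norm_le_sum_blockNorm_univ (z : EuclideanSpace ℝ (Fin n × Fin d)) :
    ‖z‖ ≤ ∑ j : Fin n, blockNorm n d z j :=
  norm_le_sum_blockNorm z Finset.univ (fun j hj => absurd (Finset.mem_univ j) hj)

end Helper

namespace Helper2

open Helper

variable {n d : ℕ}


def projLinear (k : Fin n) : EuclideanSpace ℝ (Fin n × Fin d) →ₗ[ℝ] EuclideanSpace ℝ (Fin d) where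
  toFun z := blockVec z k
  map_add' z w := blockVec_add z w k
  map_smul' c z := by ext q; simp [blockVec]

noncomputable def projL (k : Fin n) :
    EuclideanSpace ℝ (Fin n × Fin d) →L[ℝ] EuclideanSpace ℝ (Fin d) :=
  (projLinear k).toContinuousLinearMap

@[simp] lemma projL_apply (k : Fin n) (z : ES n d) (q : Fin d) : projL k z q = z (k, q) := rfl

section flow

variable (κ : NNReal)
  (F : ℝ → ES n d → ES n d)
  (θ : ℝ → ℝ → ES n d → ES n d)

/-- semigroup property of the flow -/
lemma flow_semigroup (hLip : ∀ t, LipschitzWith κ (F t))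
    (hflow0 : ∀ s x, θ s s x = x)
    (hflow : ∀ s x t, HasDerivAt (fun u => θ u s x) (F t (θ t s x)) t)
    (s σ t : ℝ) (x : ES n d) : θ t σ (θ σ s x) = θ t s x := by
  have hσ : σ ∈ Set.Ioo (min σ t - 1) (max σ t + 1) :=
    ⟨by linarith [min_le_left σ t], by linarith [le_max_left σ t]⟩
  have ht : t ∈ Set.Icc (min σ t - 1) (max σ t + 1) :=
    ⟨by linarith [min_le_right σ t], by linarith [le_max_right σ t]⟩
  have key := ODE_solution_unique_of_mem_Icc (v := F) (s := fun _ => Set.univ)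
    (f := fun u => θ u σ (θ σ s x)) (g := fun u => θ u s x)
    (fun u _ => (hLip u).lipschitzOnWith) hσ
    (fun u _ => (hflow σ (θ σ s x) u).continuousAt.continuousWithinAt)
    (fun u _ => hflow σ (θ σ s x) u) (fun _ _ => trivial)
    (fun u _ => (hflow s x u).continuousAt.continuousWithinAt)
    (fun u _ => hflow s x u) (fun _ _ => trivial)
    (by simpa using hflow0 σ (θ σ s x))
  exact key ht

/-- forward Gronwall estimate -/
lemma flow_gronwall (hLip : ∀ t, LipschitzWith κ (F t))
    (hflow0 : ∀ s x, θ s s x = x)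
    (hflow : ∀ s x t, HasDerivAt (fun u => θ u s x) (F t (θ t s x)) t)
    (σ t : ℝ) (a b : ES n d) :
    ∀ u ∈ Set.Icc σ t, ‖θ u σ a - θ u σ b‖ ≤ ‖a - b‖ * Real.exp (κ * (u - σ)) := by
  intro u hu
  have h := dist_le_of_trajectories_ODE (v := F) hLip
    (f := fun u => θ u σ a) (g := fun u => θ u σ b)
    (fun w _ => (hflow σ a w).continuousAt.continuousWithinAt)
    (fun w _ => (hflow σ a w).hasDerivWithinAt)
    (fun w _ => (hflow σ b w).continuousAt.continuousWithinAt)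
    (fun w _ => (hflow σ b w).hasDerivWithinAt)
    (δ := ‖a - b‖) (by simp [hflow0, dist_eq_norm]) u hu
  rwa [dist_eq_norm] at h

end flow

end Helper2

namespace Helper2

open Helper

variable {n d : ℕ}

noncomputable def Kc (κ : NNReal) (n : ℕ) : ℝ := (1 + n * κ)^n * (n * Real.exp κ + 1)

lemma one_le_onenk (κ : NNReal) (n : ℕ) : (1:ℝ) ≤ 1 + n * κ := by
  have : (0:ℝ) ≤ (n:ℝ) * κ := by positivity
  linarith

lemma one_le_Kc (κ : NNReal) (n : ℕ) : 1 ≤ Kc κ n := by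
  have h1 := one_le_onenk κ n
  have h2 : (1:ℝ) ≤ (n:ℝ) * Real.exp κ + 1 := by
    have : (0:ℝ) ≤ (n:ℝ) * Real.exp κ := by positivity
    linarith
  calc (1:ℝ) = 1 * 1 := by ring
    _ ≤ (1 + n * κ)^n * (n * Real.exp κ + 1) :=
        mul_le_mul (one_le_pow₀ h1) h2 (by norm_num) (by positivity)

set_option maxHeartbeats 1000000 in
lemma key_forward (hn : 1 ≤ n) (κ : NNReal)
    (F : ℝ → ES n d → ES n d)
    (hLip : ∀ t, LipschitzWith κ (F t))
    (hcasc : ∀ (t : ℝ) (a b : ES n d) (k : Fin n),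
      (∀ p : Fin n × Fin d, (k:ℕ) ≤ (p.1:ℕ) + 1 → a p = b p) →
      ∀ q : Fin d, F t a (k, q) = F t b (k, q))
    (θ : ℝ → ℝ → ES n d → ES n d)
    (hflow0 : ∀ s x, θ s s x = x)
    (hflow : ∀ s x t, HasDerivAt (fun u => θ u s x) (F t (θ t s x)) t)
    (σ t : ℝ) (hst : σ ≤ t) (hτ1 : t - σ ≤ 1) (a b : ES n d) (i : Fin n) :
    blockNorm n d (θ t σ a - θ t σ b) i
      ≤ Kc κ n * ∑ j : Fin n, (t - σ)^((i:ℕ) - (j:ℕ)) * blockNorm n d (a - b) j := by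
  classical
  have hτ0 : (0:ℝ) ≤ t - σ := by linarith
  set τ := t - σ with hτdef
  set Δ : ℝ → ES n d := fun u => θ u σ a - θ u σ b with hΔdef
  set g : Fin n → ℝ → ℝ := fun j u => blockNorm n d (Δ u) j with hgdef
  set B : Fin n → ℝ := fun j => blockNorm n d (a - b) j with hBdef
  have hΔσ : Δ σ = a - b := by simp [hΔdef, hflow0]
  have hgnn : ∀ j u, 0 ≤ g j u := fun j u => blockNorm_nonneg _ _
  have hBnn : ∀ j, 0 ≤ B j := fun j => blockNorm_nonneg _ _
  set D : ℝ → ES n d := fun u => F u (θ u σ a) - F u (θ u σ b) with hDdef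
  have hD : ∀ u, HasDerivAt Δ (D u) u := fun u => (hflow σ a u).sub (hflow σ b u)
  have hgr : ∀ u ∈ Set.Icc σ t, ‖Δ u‖ ≤ ‖a - b‖ * Real.exp (κ * (u - σ)) :=
    flow_gronwall κ F θ hLip hflow0 hflow σ t a b
  -- cascade bound on the derivative of a block
  have hcascD : ∀ (k : Fin n) (u : ℝ),
      ‖projL k (D u)‖ ≤ κ * ∑ j ∈ Finset.univ.filter (fun j : Fin n => (k:ℕ) ≤ (j:ℕ)+1),
        g j u := by
    intro k u
    set A' := θ u σ a with hA'
    set B'' := θ u σ b with hB''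
    set B' : ES n d := WithLp.toLp 2 (fun p => if (k:ℕ) ≤ (p.1:ℕ)+1 then B'' p else A' p) with hB'def
    have hFB' : ∀ q : Fin d, F u B' (k, q) = F u B'' (k, q) := by
      refine hcasc u B' B'' k (fun p hp => ?_)
      simp [hB'def, if_pos hp]
    have hproj : projL k (D u) = projL k (F u A' - F u B') := by
      ext q
      simp only [projL_apply, hDdef]
      have h1 : (F u A' - F u B'') (k, q) = F u A' (k, q) - F u B'' (k, q) := rfl
      have h2 : (F u A' - F u B') (k, q) = F u A' (k, q) - F u B' (k, q) := rfl
      rw [h1, h2, hFB' q]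
    have step1 : ‖projL k (D u)‖ ≤ ‖F u A' - F u B'‖ := by
      rw [hproj]
      have h3 : projL k (F u A' - F u B') = blockVec (F u A' - F u B') k := rfl
      rw [h3, ← blockNorm_eq]
      exact blockNorm_le_norm _ _
    have step2 : ‖F u A' - F u B'‖ ≤ κ * ‖A' - B'‖ := by
      have := (hLip u).dist_le_mul A' B'
      rwa [dist_eq_norm, dist_eq_norm] at this
    have hzero : ∀ j ∉ Finset.univ.filter (fun j : Fin n => (k:ℕ) ≤ (j:ℕ)+1),
        ∀ q : Fin d, (A' - B') (j, q) = 0 := by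
      intro j hj q
      simp only [Finset.mem_filter, Finset.mem_univ, true_and] at hj
      have h4 : (A' - B') (j, q) = A' (j, q) - B' (j, q) := rfl
      rw [h4]
      simp [hB'def, if_neg hj]
    have step3 : ‖A' - B'‖ ≤ ∑ j ∈ Finset.univ.filter (fun j : Fin n => (k:ℕ) ≤ (j:ℕ)+1),
        g j u := by
      refine le_trans (norm_le_sum_blockNorm _ _ hzero) (le_of_eq ?_)
      refine Finset.sum_congr rfl fun j hj => ?_
      simp only [Finset.mem_filter, Finset.mem_univ, true_and] at hj
      have hq : ∀ q : Fin d, (A' - B') (j, q) = (Δ u) (j, q) := by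
        intro q
        have h1 : (A' - B') (j, q) = A' (j, q) - B' (j, q) := rfl
        have h2 : (Δ u) (j, q) = A' (j, q) - B'' (j, q) := rfl
        rw [h1, h2]
        simp [hB'def, if_pos hj]
      show blockNorm n d (A' - B') j = blockNorm n d (Δ u) j
      unfold blockNorm
      congr 1
      exact Finset.sum_congr rfl fun q _ => by rw [hq q]
    calc ‖projL k (D u)‖ ≤ κ * ‖A' - B'‖ := le_trans step1 step2
      _ ≤ _ := mul_le_mul_of_nonneg_left step3 κ.coe_nonneg
  have main : ∀ m : ℕ, ∀ u ∈ Set.Icc σ t,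
      ∑ j ∈ Finset.univ.filter (fun j : Fin n => m ≤ (j:ℕ)), g j u
        ≤ ((1 + n * κ)^m * (n * Real.exp κ + 1)) * ∑ j : Fin n, τ^(m - (j:ℕ)) * B j := by
    intro m
    induction m with
    | zero =>
      intro u hu
      have h1 : Finset.univ.filter (fun j : Fin n => 0 ≤ (j:ℕ)) = Finset.univ := by simp
      rw [h1, pow_zero, one_mul]
      have h7 : ∑ j : Fin n, τ^(0 - (j:ℕ)) * B j = ∑ j : Fin n, B j :=
        Finset.sum_congr rfl fun j _ => by simp
      rw [h7]
      have h3 : ∑ j : Fin n, g j u ≤ (n:ℝ) * ‖Δ u‖ := by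
        calc ∑ j : Fin n, g j u ≤ ∑ _j : Fin n, ‖Δ u‖ :=
              Finset.sum_le_sum (fun j _ => blockNorm_le_norm _ _)
          _ = (n:ℝ) * ‖Δ u‖ := by simp [Finset.sum_const, Finset.card_univ]
      have hexpmono : Real.exp ((κ:ℝ) * (u - σ)) ≤ Real.exp κ := by
        apply Real.exp_le_exp.mpr
        have h5 : u - σ ≤ 1 := by
          have := hu.2; simp only [hτdef] at hτ1; linarith
        nlinarith [κ.coe_nonneg]
      have h4 : ‖Δ u‖ ≤ ‖a - b‖ * Real.exp (κ:ℝ) :=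
        le_trans (hgr u hu) (mul_le_mul_of_nonneg_left hexpmono (norm_nonneg _))
      have h6 : ‖a - b‖ ≤ ∑ j : Fin n, B j := norm_le_sum_blockNorm_univ _
      have hexp : (0:ℝ) ≤ Real.exp (κ:ℝ) := le_of_lt (Real.exp_pos _)
      have hBsum : (0:ℝ) ≤ ∑ j : Fin n, B j := Finset.sum_nonneg fun j _ => hBnn j
      have hnn : (0:ℝ) ≤ (n:ℝ) := Nat.cast_nonneg n
      have hΔnn : (0:ℝ) ≤ ‖Δ u‖ := norm_nonneg _
      nlinarith [mul_le_mul_of_nonneg_left h4 hnn,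
        mul_le_mul_of_nonneg_left h6 (mul_nonneg hnn hexp)]
    | succ m ih =>
      intro u hu
      set Cm : ℝ := (1 + n*κ)^m * (n * Real.exp κ + 1) with hCm
      have hCm1 : 1 ≤ Cm := by
        have h2 : (1:ℝ) ≤ (n:ℝ) * Real.exp κ + 1 := by
          have : (0:ℝ) ≤ (n:ℝ) * Real.exp κ := by positivity
          linarith
        calc (1:ℝ) = 1 * 1 := by ring
          _ ≤ Cm := mul_le_mul (one_le_pow₀ (one_le_onenk κ n)) h2 (by norm_num) (by positivity)
      set S : ℝ := ∑ j : Fin n, τ^(m - (j:ℕ)) * B j with hS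
      have hSnn : 0 ≤ S :=
        Finset.sum_nonneg fun j _ => mul_nonneg (pow_nonneg hτ0 _) (hBnn j)
      have hboundD : ∀ w ∈ Set.Icc σ t, ∀ k : Fin n, m + 1 ≤ (k:ℕ) →
          ‖projL k (D w)‖ ≤ (κ:ℝ) * (Cm * S) := by
        intro w hw k hk
        refine le_trans (hcascD k w) (mul_le_mul_of_nonneg_left ?_ κ.coe_nonneg)
        refine le_trans (Finset.sum_le_sum_of_subset_of_nonneg ?_
          (fun j _ _ => hgnn j w)) (ih w hw)
        intro j hj
        simp only [Finset.mem_filter, Finset.mem_univ, true_and] at hj ⊢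
        omega
      have husub : σ ≤ u ∧ u ≤ t := hu
      have hblock : ∀ k : Fin n, m + 1 ≤ (k:ℕ) →
          g k u ≤ B k + (κ:ℝ) * (Cm * S) * (u - σ) := by
        intro k hk
        have hderiv : ∀ w ∈ Set.Icc σ t, HasDerivWithinAt (fun w => projL k (Δ w))
            (projL k (D w)) (Set.Icc σ t) w :=
          fun w _ => ((projL k).hasFDerivAt.comp_hasDerivAt w (hD w)).hasDerivWithinAt
        have hmvt := Convex.norm_image_sub_le_of_norm_hasDerivWithin_le hderiv
          (fun w hw => hboundD w hw k hk) (convex_Icc σ t) (Set.left_mem_Icc.mpr hst) hu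
        have hnorm_eq : ‖u - σ‖ = u - σ := by
          rw [Real.norm_eq_abs, abs_of_nonneg (by linarith [husub.1])]
        rw [hnorm_eq] at hmvt
        have e1 : g k u = ‖projL k (Δ u)‖ := by
          have : projL k (Δ u) = blockVec (Δ u) k := rfl
          rw [this, ← blockNorm_eq]
        have e2 : ‖projL k (Δ σ)‖ = B k := by
          have h0 : projL k (Δ σ) = blockVec (a - b) k := by rw [hΔσ]; rfl
          rw [h0, ← blockNorm_eq]
        have tri : ‖projL k (Δ u)‖ ≤ ‖projL k (Δ σ)‖ +
            ‖projL k (Δ u) - projL k (Δ σ)‖ := by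
          have := norm_add_le (projL k (Δ u) - projL k (Δ σ)) (projL k (Δ σ))
          simpa [sub_add_cancel, add_comm] using this
        rw [e1]
        calc ‖projL k (Δ u)‖ ≤ ‖projL k (Δ σ)‖ + ‖projL k (Δ u) - projL k (Δ σ)‖ := tri
          _ ≤ B k + (κ:ℝ) * (Cm * S) * (u - σ) := by
              rw [e2]; exact add_le_add_right hmvt _
      set filt := Finset.univ.filter (fun j : Fin n => m+1 ≤ (j:ℕ)) with hfilt
      set T' : ℝ := ∑ j : Fin n, τ^((m+1) - (j:ℕ)) * B j with hT'
      have hT'nn : 0 ≤ T' :=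
        Finset.sum_nonneg fun j _ => mul_nonneg (pow_nonneg hτ0 _) (hBnn j)
      have hsum : ∑ k ∈ filt, g k u ≤ ∑ k ∈ filt, (B k + (κ:ℝ) * (Cm*S) * (u - σ)) :=
        Finset.sum_le_sum (fun k hk => hblock k
          (by simp only [hfilt, Finset.mem_filter, Finset.mem_univ, true_and] at hk; exact hk))
      have h8 : ∑ k ∈ filt, B k ≤ T' := by
        have e3 : ∀ k ∈ filt, B k = τ^((m+1) - (k:ℕ)) * B k := by
          intro k hk
          simp only [hfilt, Finset.mem_filter, Finset.mem_univ, true_and] at hk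
          rw [show (m+1) - (k:ℕ) = 0 by omega, pow_zero, one_mul]
        rw [Finset.sum_congr rfl e3]
        exact Finset.sum_le_sum_of_subset_of_nonneg (Finset.subset_univ filt)
          (fun j _ _ => mul_nonneg (pow_nonneg hτ0 _) (hBnn j))
      have h10 : τ * S ≤ T' := by
        rw [hS, Finset.mul_sum]
        refine Finset.sum_le_sum fun j _ => ?_
        have e4 : τ * (τ^(m - (j:ℕ)) * B j) = τ^((m - (j:ℕ)) + 1) * B j := by
          rw [pow_succ]; ring
        rw [e4]
        exact mul_le_mul_of_nonneg_right
          (pow_le_pow_of_le_one hτ0 hτ1 (by omega)) (hBnn j)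
      have hcard : (filt.card : ℝ) ≤ (n:ℝ) := by
        have := Finset.card_le_univ filt
        simp only [Finset.card_univ, Fintype.card_fin] at this
        exact_mod_cast this
      have hc_nn : 0 ≤ (κ:ℝ) * (Cm*S) * (u - σ) :=
        mul_nonneg (mul_nonneg κ.coe_nonneg (mul_nonneg (by linarith) hSnn))
          (by linarith [husub.1])
      have hsum2 : ∑ k ∈ filt, (B k + (κ:ℝ) * (Cm*S) * (u - σ))
          = (∑ k ∈ filt, B k) + (filt.card : ℝ) * ((κ:ℝ) * (Cm*S) * (u - σ)) := by
        rw [Finset.sum_add_distrib, Finset.sum_const, nsmul_eq_mul]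
      have huτ : u - σ ≤ τ := by simp only [hτdef]; linarith [husub.2]
      have hstep : (κ:ℝ) * (Cm*S) * (u - σ) ≤ (κ:ℝ) * Cm * T' := by
        have c1 : (κ:ℝ) * (Cm*S) * (u - σ) ≤ (κ:ℝ) * (Cm*S) * τ :=
          mul_le_mul_of_nonneg_left huτ
            (mul_nonneg κ.coe_nonneg (mul_nonneg (by linarith) hSnn))
        have c2 : (κ:ℝ) * (Cm*S) * τ = (κ:ℝ) * Cm * (τ * S) := by ring
        have c3 : (κ:ℝ) * Cm * (τ * S) ≤ (κ:ℝ) * Cm * T' :=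
          mul_le_mul_of_nonneg_left h10 (mul_nonneg κ.coe_nonneg (by linarith))
        linarith [c1, c3, le_of_eq c2]
      have hfinal : ∑ k ∈ filt, g k u ≤ (1 + (n:ℝ) * κ * Cm) * T' := by
        have d1 : (filt.card : ℝ) * ((κ:ℝ) * (Cm*S) * (u - σ))
            ≤ (n:ℝ) * ((κ:ℝ) * Cm * T') := by
          calc (filt.card : ℝ) * ((κ:ℝ) * (Cm*S) * (u - σ))
              ≤ (n:ℝ) * ((κ:ℝ) * (Cm*S) * (u - σ)) :=
                mul_le_mul_of_nonneg_right hcard hc_nn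
            _ ≤ (n:ℝ) * ((κ:ℝ) * Cm * T') :=
                mul_le_mul_of_nonneg_left hstep (Nat.cast_nonneg n)
        calc ∑ k ∈ filt, g k u
            ≤ (∑ k ∈ filt, B k) + (filt.card : ℝ) * ((κ:ℝ) * (Cm*S) * (u - σ)) := by
              rw [← hsum2]; exact hsum
          _ ≤ T' + (n:ℝ) * ((κ:ℝ) * Cm * T') := add_le_add h8 d1
          _ = (1 + (n:ℝ) * κ * Cm) * T' := by ring
      have hCco : (1 + (n:ℝ) * κ * Cm) ≤ (1 + (n:ℝ) * κ) * Cm := by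
        have e : (1 + (n:ℝ) * κ) * Cm = Cm + (n:ℝ) * κ * Cm := by ring
        rw [e]
        have h2 : (0:ℝ) ≤ (n:ℝ) * κ := by positivity
        linarith
      calc ∑ k ∈ filt, g k u ≤ (1 + (n:ℝ) * κ * Cm) * T' := hfinal
        _ ≤ ((1 + (n:ℝ) * κ) * Cm) * T' := mul_le_mul_of_nonneg_right hCco hT'nn
        _ = ((1 + n * κ)^(m+1) * (n * Real.exp κ + 1)) * T' := by rw [hCm]; ring
  -- conclusion
  have hit : t ∈ Set.Icc σ t := Set.right_mem_Icc.mpr hst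
  have hmem : i ∈ Finset.univ.filter (fun j : Fin n => (i:ℕ) ≤ (j:ℕ)) := by
    simp
  have h11 : g i t ≤ ∑ j ∈ Finset.univ.filter (fun j : Fin n => (i:ℕ) ≤ (j:ℕ)), g j t :=
    Finset.single_le_sum (fun j _ => hgnn j t) hmem
  have h12 := main (i:ℕ) t hit
  have hSi : (0:ℝ) ≤ ∑ j : Fin n, τ^((i:ℕ) - (j:ℕ)) * B j :=
    Finset.sum_nonneg fun j _ => mul_nonneg (pow_nonneg hτ0 _) (hBnn j)
  have h13 : ((1 + (n:ℝ) * κ)^(i:ℕ) * (n * Real.exp κ + 1)) ≤ Kc κ n := by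
    rw [Kc]
    have : ((1:ℝ) + n * κ)^(i:ℕ) ≤ (1 + (n:ℝ) * κ)^n :=
      pow_le_pow_right₀ (one_le_onenk κ n) (le_of_lt i.2)
    have h2 : (0:ℝ) ≤ (n:ℝ) * Real.exp κ + 1 := by positivity
    exact mul_le_mul_of_nonneg_right this h2
  calc g i t ≤ ((1 + (n:ℝ) * κ)^(i:ℕ) * (n * Real.exp κ + 1))
        * ∑ j : Fin n, τ^((i:ℕ) - (j:ℕ)) * B j := le_trans h11 h12
    _ ≤ Kc κ n * ∑ j : Fin n, τ^((i:ℕ) - (j:ℕ)) * B j :=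
        mul_le_mul_of_nonneg_right h13 hSi

lemma key_both (hn : 1 ≤ n) (κ : NNReal)
    (F : ℝ → ES n d → ES n d)
    (hLip : ∀ t, LipschitzWith κ (F t))
    (hcasc : ∀ (t : ℝ) (a b : ES n d) (k : Fin n),
      (∀ p : Fin n × Fin d, (k:ℕ) ≤ (p.1:ℕ) + 1 → a p = b p) →
      ∀ q : Fin d, F t a (k, q) = F t b (k, q))
    (θ : ℝ → ℝ → ES n d → ES n d)
    (hflow0 : ∀ s x, θ s s x = x)
    (hflow : ∀ s x t, HasDerivAt (fun u => θ u s x) (F t (θ t s x)) t)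
    (σ t : ℝ) (hτ1 : |t - σ| ≤ 1) (a b : ES n d) (i : Fin n) :
    blockNorm n d (θ t σ a - θ t σ b) i
      ≤ Kc κ n * ∑ j : Fin n, |t - σ|^((i:ℕ) - (j:ℕ)) * blockNorm n d (a - b) j := by
  rcases le_total σ t with hst | hst
  · have habs : |t - σ| = t - σ := abs_of_nonneg (by linarith)
    rw [habs] at hτ1 ⊢
    exact key_forward hn κ F hLip hcasc θ hflow0 hflow σ t hst hτ1 a b i
  · -- time reversal
    set c := σ + t with hc
    set G : ℝ → ES n d → ES n d := fun u z => -(F (c - u) z) with hG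
    set ϑ : ℝ → ℝ → ES n d → ES n d := fun u s z => θ (c - u) (c - s) z with hϑ
    have hLipG : ∀ u, LipschitzWith κ (G u) := fun u => (hLip (c - u)).neg
    have hcascG : ∀ (u : ℝ) (a b : ES n d) (k : Fin n),
        (∀ p : Fin n × Fin d, (k:ℕ) ≤ (p.1:ℕ) + 1 → a p = b p) →
        ∀ q : Fin d, G u a (k, q) = G u b (k, q) := by
      intro u a b k h q
      have h1 : G u a (k, q) = -(F (c - u) a (k, q)) := rfl
      have h2 : G u b (k, q) = -(F (c - u) b (k, q)) := rfl
      rw [h1, h2, hcasc (c - u) a b k h q]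
    have hflow0G : ∀ s x, ϑ s s x = x := fun s x => hflow0 (c - s) x
    have hflowG : ∀ s x w, HasDerivAt (fun u => ϑ u s x) (G w (ϑ w s x)) w := by
      intro s x w
      have hg : HasDerivAt (fun u : ℝ => c - u) (-1) w := by
        simpa using (hasDerivAt_id w).const_sub c
      have hf := hflow (c - s) x (c - w)
      have := HasDerivAt.scomp (h := fun u : ℝ => c - u) (x := w) hf hg
      simp only [neg_smul, one_smul] at this; exact this
    have hts : t ≤ σ := hst
    have habs : |t - σ| = σ - t := by rw [abs_sub_comm, abs_of_nonneg (by linarith)]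
    have hkey := key_forward hn κ G hLipG hcascG ϑ hflow0G hflowG t σ hts
      (by rw [habs] at hτ1; linarith) a b i
    have e1 : ϑ σ t a = θ t σ a := by simp [hϑ, hc]
    have e2 : ϑ σ t b = θ t σ b := by simp [hϑ, hc]
    rw [e1, e2] at hkey
    rw [habs]
    exact hkey

end Helper2

section rpowhelp

lemma rpow_add_le_add_rpow' {x y p : ℝ} (hx : 0 ≤ x) (hy : 0 ≤ y) (hp0 : 0 ≤ p) (hp1 : p ≤ 1) :
    (x + y) ^ p ≤ x ^ p + y ^ p := by
  have h := NNReal.rpow_add_le_add_rpow x.toNNReal y.toNNReal hp0 hp1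
  have hc : ((x.toNNReal + y.toNNReal : NNReal) : ℝ) = x + y := by
    simp [Real.coe_toNNReal x hx, Real.coe_toNNReal y hy]
  calc (x + y)^p = (((x.toNNReal + y.toNNReal) : NNReal) : ℝ)^p := by rw [hc]
    _ = (((x.toNNReal + y.toNNReal)^p : NNReal) : ℝ) := by
        rw [NNReal.coe_rpow]
    _ ≤ ((x.toNNReal^p + y.toNNReal^p : NNReal) : ℝ) := by exact_mod_cast h
    _ = x^p + y^p := by
        push_cast [NNReal.coe_rpow, Real.coe_toNNReal x hx, Real.coe_toNNReal y hy]
        ring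

lemma rpow_sum_le_sum_rpow' {ι : Type*} (s : Finset ι) (f : ι → ℝ) {p : ℝ}
    (hf : ∀ i ∈ s, 0 ≤ f i) (hp0 : 0 < p) (hp1 : p ≤ 1) :
    (∑ i ∈ s, f i) ^ p ≤ ∑ i ∈ s, (f i) ^ p := by
  classical
  induction s using Finset.induction with
  | empty => simp [Real.zero_rpow (ne_of_gt hp0)]
  | insert a s' hx ih =>
      rw [Finset.sum_insert hx, Finset.sum_insert hx]
      have h1 : (f a + ∑ i ∈ s', f i) ^ p ≤ (f a)^p + (∑ i ∈ s', f i)^p :=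
        rpow_add_le_add_rpow' (hf a (Finset.mem_insert_self a s'))
          (Finset.sum_nonneg fun i hi => hf i (Finset.mem_insert_of_mem hi)) hp0.le hp1
      have h2 := ih (fun i hi => hf i (Finset.mem_insert_of_mem hi))
      linarith

/-- The Young-type estimate for a single term. -/
lemma term_bound {τ bj : ℝ} (hτ0 : 0 ≤ τ) (hτ1 : τ ≤ 1) (hb0 : 0 ≤ bj) (hb1 : bj ≤ 1)
    (i j : ℕ) :
    (τ^(i - j) * bj) ^ ((1:ℝ)/(2*(i:ℝ)+1)) ≤ τ^((1:ℝ)/2) + bj^((1:ℝ)/(2*(j:ℝ)+1)) := by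
  have hi1 : (0:ℝ) < 2*(i:ℝ)+1 := by positivity
  have hj1 : (0:ℝ) < 2*(j:ℝ)+1 := by positivity
  set αi : ℝ := (1:ℝ)/(2*(i:ℝ)+1) with hαi
  set αj : ℝ := (1:ℝ)/(2*(j:ℝ)+1) with hαj
  have hαi0 : 0 < αi := by positivity
  have hαj0 : 0 < αj := by positivity
  have hunn : (0:ℝ) ≤ τ^((1:ℝ)/2) := Real.rpow_nonneg hτ0 _
  have hvnn : (0:ℝ) ≤ bj^αj := Real.rpow_nonneg hb0 _
  rcases le_or_gt i j with hij | hij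
  · -- i ≤ j : exponent zero
    rw [Nat.sub_eq_zero_of_le hij, pow_zero, one_mul]
    rcases eq_or_lt_of_le hb0 with h0 | h0
    · rw [← h0, Real.zero_rpow (ne_of_gt hαi0)]
      positivity
    · have hexp : αj ≤ αi := by
        rw [hαi, hαj]
        apply one_div_le_one_div_of_le hi1
        have : (i:ℝ) ≤ (j:ℝ) := Nat.cast_le.mpr hij
        linarith
      have := Real.rpow_le_rpow_of_exponent_ge h0 hb1 hexp
      linarith
  · -- j < i
    have hji : j ≤ i := le_of_lt hij
    set N : ℕ := i - j with hN
    have hNcast : (N:ℝ) = (i:ℝ) - (j:ℝ) := by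
      rw [hN]; push_cast [Nat.cast_sub hji]; ring
    have hw1 : (0:ℝ) ≤ 2*(N:ℝ)*αi := by positivity
    have hw2 : (0:ℝ) ≤ (2*(j:ℝ)+1)*αi := by positivity
    have hsum : 2*(N:ℝ)*αi + (2*(j:ℝ)+1)*αi = 1 := by
      rw [hαi, hNcast]
      field_simp
      ring
    have e1 : (τ^N * bj)^αi = (τ^((1:ℝ)/2))^(2*(N:ℝ)*αi) * (bj^αj)^((2*(j:ℝ)+1)*αi) := by
      rw [Real.mul_rpow (pow_nonneg hτ0 _) hb0]
      congr 1
      · rw [← Real.rpow_natCast τ N, ← Real.rpow_mul hτ0, ← Real.rpow_mul hτ0]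
        congr 1
        ring
      · rw [← Real.rpow_mul hb0]
        congr 1
        rw [hαj]
        field_simp
    rw [e1]
    have hgm := Real.geom_mean_le_arith_mean2_weighted hw1 hw2 hunn hvnn hsum
    have hb1' : 2*(N:ℝ)*αi ≤ 1 := by linarith
    have hb2' : (2*(j:ℝ)+1)*αi ≤ 1 := by linarith
    have : 2*(N:ℝ)*αi * (τ^((1:ℝ)/2)) + (2*(j:ℝ)+1)*αi * (bj^αj)
        ≤ τ^((1:ℝ)/2) + bj^αj := by
      have := mul_le_of_le_one_left hunn hb1'
      have := mul_le_of_le_one_left hvnn hb2'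
      linarith
    linarith

end rpowhelp



section rhofacts

variable {n d : ℕ}

lemma alpha_pos (i : Fin n) : (0:ℝ) < (1:ℝ) / (2 * ((i:ℕ):ℝ) + 1) := by positivity

lemma alpha_le_one (i : Fin n) : (1:ℝ) / (2 * ((i:ℕ):ℝ) + 1) ≤ 1 := by
  rw [div_le_one (by positivity)]
  have : (0:ℝ) ≤ ((i:ℕ):ℝ) := Nat.cast_nonneg _
  linarith

lemma rho_sum_nonneg (u : ℝ) (z : EuclideanSpace ℝ (Fin n × Fin d)) :
    (0:ℝ) ≤ ∑ i : Fin n, blockNorm n d z i ^ ((1:ℝ) / (2 * (i:ℕ) + 1)) :=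
  Finset.sum_nonneg fun i _ => Real.rpow_nonneg (Helper.blockNorm_nonneg z i) _

lemma abs_rpow_le_rho (u : ℝ) (z : EuclideanSpace ℝ (Fin n × Fin d)) :
    |u| ^ ((1:ℝ)/2) ≤ rho n d u z :=
  le_add_of_nonneg_right (rho_sum_nonneg u z)

lemma blockNorm_rpow_le_rho (u : ℝ) (z : EuclideanSpace ℝ (Fin n × Fin d)) (j : Fin n) :
    blockNorm n d z j ^ ((1:ℝ) / (2 * (j:ℕ) + 1)) ≤ rho n d u z := by
  have h1 : blockNorm n d z j ^ ((1:ℝ) / (2 * (j:ℕ) + 1))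
      ≤ ∑ i : Fin n, blockNorm n d z i ^ ((1:ℝ) / (2 * (i:ℕ) + 1)) :=
    Finset.single_le_sum (f := fun i : Fin n => blockNorm n d z i ^ ((1:ℝ) / (2 * (i:ℕ) + 1)))
      (fun i _ => Real.rpow_nonneg (Helper.blockNorm_nonneg z i) _) (Finset.mem_univ j)
  have h2 : (0:ℝ) ≤ |u| ^ ((1:ℝ)/2) := Real.rpow_nonneg (abs_nonneg u) _
  unfold rho
  linarith

lemma rho_nonneg (u : ℝ) (z : EuclideanSpace ℝ (Fin n × Fin d)) : 0 ≤ rho n d u z :=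
  le_trans (Real.rpow_nonneg (abs_nonneg u) _) (abs_rpow_le_rho u z)

lemma base_le_one_of_rpow_le_one {x p : ℝ} (hx : 0 ≤ x) (hp : 0 < p) (h : x ^ p ≤ 1) :
    x ≤ 1 := by
  by_contra hcon
  push_neg at hcon
  have h2 : (1:ℝ) ^ p < x ^ p := Real.rpow_lt_rpow (by norm_num) hcon hp
  rw [Real.one_rpow] at h2
  linarith

lemma rho_le_one_extract {u : ℝ} {z : EuclideanSpace ℝ (Fin n × Fin d)}
    (h : rho n d u z ≤ 1) : |u| ≤ 1 ∧ ∀ j : Fin n, blockNorm n d z j ≤ 1 := by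
  constructor
  · exact base_le_one_of_rpow_le_one (abs_nonneg u) (by norm_num)
      (le_trans (abs_rpow_le_rho u z) h)
  · intro j
    exact base_le_one_of_rpow_le_one (Helper.blockNorm_nonneg z j) (alpha_pos j)
      (le_trans (blockNorm_rpow_le_rho u z j) h)

end rhofacts

set_option maxHeartbeats 1000000 in
/-- Local quasi-triangle inequality for d((s,x),(t,y)) = ρ(t−s, θ_{t,s}(x) − y), where θ
is the flow of a Lipschitz cascade vector field F (block k of F depends only on the
blocks of index ≥ k−1, and block 0 on all blocks). -/
theorem stmt_11 (n d : ℕ) (hn : 1 ≤ n) (T : ℝ) (hT : 0 < T) (κ : NNReal)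
    (F : ℝ → EuclideanSpace ℝ (Fin n × Fin d) → EuclideanSpace ℝ (Fin n × Fin d))
    (hLip : ∀ t, LipschitzWith κ (F t))
    (hcasc : ∀ (t : ℝ) (a b : EuclideanSpace ℝ (Fin n × Fin d)) (k : Fin n),
      (∀ p : Fin n × Fin d, (k:ℕ) ≤ (p.1:ℕ) + 1 → a p = b p) →
      ∀ q : Fin d, F t a (k, q) = F t b (k, q))
    (θ : ℝ → ℝ → EuclideanSpace ℝ (Fin n × Fin d) → EuclideanSpace ℝ (Fin n × Fin d))
    (hflow0 : ∀ s x, θ s s x = x)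
    (hflow : ∀ s x t, HasDerivAt (fun u => θ u s x) (F t (θ t s x)) t) :
    ∃ C : ℝ, 1 ≤ C ∧ ∀ (s t σ : ℝ), s ∈ Set.Icc (-T) T → t ∈ Set.Icc (-T) T →
      σ ∈ Set.Icc (-T) T →
      ∀ x y ξ : EuclideanSpace ℝ (Fin n × Fin d),
      rho n d (σ - s) (θ σ s x - ξ) ≤ 1 →
      rho n d (t - σ) (θ t σ ξ - y) ≤ 1 →
      rho n d (t - s) (θ t s x - y)
        ≤ C * (rho n d (σ - s) (θ σ s x - ξ) + rho n d (t - σ) (θ t σ ξ - y)) := by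

  classical
  have hKc1 := Helper2.one_le_Kc κ n
  have hKcnn : (0:ℝ) ≤ (n:ℝ)^2 * Helper2.Kc κ n :=
    mul_nonneg (by positivity) (by linarith)
  refine ⟨(n:ℝ)^2 * Helper2.Kc κ n + 2, by linarith, ?_⟩
  intro s t σ hs ht hσ x y ξ h1 h2
  set w := θ σ s x - ξ with hw
  set e := θ t σ ξ - y with he
  set Δ := θ t σ (θ σ s x) - θ t σ ξ with hΔ
  have hsg := Helper2.flow_semigroup κ F θ hLip hflow0 hflow s σ t x
  have hdec : θ t s x - y = Δ + e := by
    rw [hΔ, he, sub_add_sub_cancel, hsg]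
  set P1 := rho n d (σ - s) w with hP1
  set P2 := rho n d (t - σ) e with hP2
  have hP1nn : 0 ≤ P1 := rho_nonneg _ _
  have hP2nn : 0 ≤ P2 := rho_nonneg _ _
  obtain ⟨hu1, hw1⟩ := rho_le_one_extract (n := n) (d := d) h1
  obtain ⟨hτ1, -⟩ := rho_le_one_extract (n := n) (d := d) h2
  -- key estimate on Δ
  have hkey : ∀ i : Fin n, blockNorm n d Δ i
      ≤ Helper2.Kc κ n * ∑ j : Fin n, |t - σ|^((i:ℕ) - (j:ℕ)) * blockNorm n d w j := by
    intro i
    have := Helper2.key_both hn κ F hLip hcasc θ hflow0 hflow σ t hτ1 (θ σ s x) ξ i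
    rw [← hw, ← hΔ] at this
    exact this
  -- step A : time part
  have hA : |t - s| ^ ((1:ℝ)/2) ≤ |σ - s| ^ ((1:ℝ)/2) + |t - σ| ^ ((1:ℝ)/2) := by
    have habs : |t - s| ≤ |σ - s| + |t - σ| := by
      have : t - s = (σ - s) + (t - σ) := by ring
      rw [this]
      exact abs_add_le _ _
    calc |t - s| ^ ((1:ℝ)/2) ≤ (|σ - s| + |t - σ|) ^ ((1:ℝ)/2) :=
          Real.rpow_le_rpow (abs_nonneg _) habs (by norm_num)
      _ ≤ |σ - s| ^ ((1:ℝ)/2) + |t - σ| ^ ((1:ℝ)/2) :=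
          rpow_add_le_add_rpow' (abs_nonneg _) (abs_nonneg _) (by norm_num) (by norm_num)
  -- step C : the block part of Δ
  have hC : ∀ i : Fin n, blockNorm n d Δ i ^ ((1:ℝ) / (2 * (i:ℕ) + 1))
      ≤ Helper2.Kc κ n * ((n:ℝ) * (P1 + P2)) := by
    intro i
    set αi : ℝ := (1:ℝ) / (2 * ((i:ℕ):ℝ) + 1) with hαidef
    have hαi0 : 0 < αi := alpha_pos i
    have hαi1 : αi ≤ 1 := alpha_le_one i
    set X : ℝ := ∑ j : Fin n, |t - σ|^((i:ℕ) - (j:ℕ)) * blockNorm n d w j with hX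
    have hXnn : 0 ≤ X := Finset.sum_nonneg fun j _ =>
      mul_nonneg (pow_nonneg (abs_nonneg _) _) (Helper.blockNorm_nonneg _ _)
    have c1 : blockNorm n d Δ i ^ αi ≤ (Helper2.Kc κ n * X) ^ αi :=
      Real.rpow_le_rpow (Helper.blockNorm_nonneg _ _) (hkey i) hαi0.le
    have c2 : (Helper2.Kc κ n * X) ^ αi = (Helper2.Kc κ n) ^ αi * X ^ αi :=
      Real.mul_rpow (by linarith) hXnn
    have c3 : (Helper2.Kc κ n) ^ αi ≤ Helper2.Kc κ n := by
      have := Real.rpow_le_rpow_of_exponent_le hKc1 hαi1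
      rwa [Real.rpow_one] at this
    have c4 : X ^ αi ≤ ∑ j : Fin n, (|t - σ|^((i:ℕ) - (j:ℕ)) * blockNorm n d w j) ^ αi := by
      rw [hX]
      exact rpow_sum_le_sum_rpow' _ _ (fun j _ =>
        mul_nonneg (pow_nonneg (abs_nonneg _) _) (Helper.blockNorm_nonneg _ _)) hαi0 hαi1
    have c5 : ∀ j : Fin n, (|t - σ|^((i:ℕ) - (j:ℕ)) * blockNorm n d w j) ^ αi
        ≤ P1 + P2 := by
      intro j
      have htb := term_bound (abs_nonneg (t - σ)) hτ1 (Helper.blockNorm_nonneg w j) (hw1 j)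
        (i:ℕ) (j:ℕ)
      have hb1 : |t - σ| ^ ((1:ℝ)/2) ≤ P2 := abs_rpow_le_rho _ _
      have hb2 : blockNorm n d w j ^ ((1:ℝ)/(2*((j:ℕ):ℝ)+1)) ≤ P1 :=
        blockNorm_rpow_le_rho _ _ j
      calc (|t - σ|^((i:ℕ) - (j:ℕ)) * blockNorm n d w j) ^ αi
          ≤ |t - σ| ^ ((1:ℝ)/2) + blockNorm n d w j ^ ((1:ℝ)/(2*((j:ℕ):ℝ)+1)) := htb
        _ ≤ P1 + P2 := by linarith
    have c6 : ∑ j : Fin n, (|t - σ|^((i:ℕ) - (j:ℕ)) * blockNorm n d w j) ^ αi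
        ≤ (n:ℝ) * (P1 + P2) := by
      calc ∑ j : Fin n, (|t - σ|^((i:ℕ) - (j:ℕ)) * blockNorm n d w j) ^ αi
          ≤ ∑ _j : Fin n, (P1 + P2) := Finset.sum_le_sum fun j _ => c5 j
        _ = (n:ℝ) * (P1 + P2) := by
            simp only [Finset.sum_const, Finset.card_univ, Fintype.card_fin, nsmul_eq_mul]
    calc blockNorm n d Δ i ^ αi ≤ (Helper2.Kc κ n * X) ^ αi := c1
      _ = (Helper2.Kc κ n) ^ αi * X ^ αi := c2
      _ ≤ Helper2.Kc κ n * ((n:ℝ) * (P1 + P2)) := by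
          have hXα : 0 ≤ X ^ αi := Real.rpow_nonneg hXnn _
          have := mul_le_mul c3 (le_trans c4 c6) hXα (by linarith)
          exact this
  -- step B : triangle for blocks
  have hB : ∀ i : Fin n, blockNorm n d (Δ + e) i ^ ((1:ℝ) / (2 * (i:ℕ) + 1))
      ≤ blockNorm n d Δ i ^ ((1:ℝ) / (2 * (i:ℕ) + 1))
        + blockNorm n d e i ^ ((1:ℝ) / (2 * (i:ℕ) + 1)) := by
    intro i
    have h1' : blockNorm n d (Δ + e) i ^ ((1:ℝ) / (2 * (i:ℕ) + 1))
        ≤ (blockNorm n d Δ i + blockNorm n d e i) ^ ((1:ℝ) / (2 * (i:ℕ) + 1)) :=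
      Real.rpow_le_rpow (Helper.blockNorm_nonneg _ _) (Helper.blockNorm_add_le Δ e i)
        (alpha_pos i).le
    exact le_trans h1' (rpow_add_le_add_rpow' (Helper.blockNorm_nonneg _ _)
      (Helper.blockNorm_nonneg _ _) (alpha_pos i).le (alpha_le_one i))
  -- assemble
  have hsum : ∑ i : Fin n, blockNorm n d (Δ + e) i ^ ((1:ℝ) / (2 * (i:ℕ) + 1))
      ≤ (n:ℝ) * (Helper2.Kc κ n * ((n:ℝ) * (P1 + P2)))
        + ∑ i : Fin n, blockNorm n d e i ^ ((1:ℝ) / (2 * (i:ℕ) + 1)) := by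
    calc ∑ i : Fin n, blockNorm n d (Δ + e) i ^ ((1:ℝ) / (2 * (i:ℕ) + 1))
        ≤ ∑ i : Fin n, (blockNorm n d Δ i ^ ((1:ℝ) / (2 * (i:ℕ) + 1))
            + blockNorm n d e i ^ ((1:ℝ) / (2 * (i:ℕ) + 1))) :=
          Finset.sum_le_sum fun i _ => hB i
      _ = ∑ i : Fin n, blockNorm n d Δ i ^ ((1:ℝ) / (2 * (i:ℕ) + 1))
            + ∑ i : Fin n, blockNorm n d e i ^ ((1:ℝ) / (2 * (i:ℕ) + 1)) :=
          Finset.sum_add_distrib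
      _ ≤ (n:ℝ) * (Helper2.Kc κ n * ((n:ℝ) * (P1 + P2)))
            + ∑ i : Fin n, blockNorm n d e i ^ ((1:ℝ) / (2 * (i:ℕ) + 1)) := by
          have : ∑ i : Fin n, blockNorm n d Δ i ^ ((1:ℝ) / (2 * (i:ℕ) + 1))
              ≤ ∑ _i : Fin n, Helper2.Kc κ n * ((n:ℝ) * (P1 + P2)) :=
            Finset.sum_le_sum fun i _ => hC i
          simp only [Finset.sum_const, Finset.card_univ, Fintype.card_fin,
            nsmul_eq_mul] at this
          linarith
  have hP2eq : |t - σ| ^ ((1:ℝ)/2)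
      + ∑ i : Fin n, blockNorm n d e i ^ ((1:ℝ) / (2 * (i:ℕ) + 1)) = P2 := rfl
  have hP1part : |σ - s| ^ ((1:ℝ)/2) ≤ P1 := abs_rpow_le_rho _ _
  have hrho_expand : rho n d (t - s) (θ t s x - y)
      = |t - s| ^ ((1:ℝ)/2) + ∑ i : Fin n, blockNorm n d (Δ + e) i ^ ((1:ℝ) / (2 * (i:ℕ) + 1)) := by
    rw [rho, hdec]
  rw [hrho_expand]
  have target : |t - s| ^ ((1:ℝ)/2)
      + ∑ i : Fin n, blockNorm n d (Δ + e) i ^ ((1:ℝ) / (2 * (i:ℕ) + 1))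
      ≤ P1 + P2 + (n:ℝ)^2 * Helper2.Kc κ n * (P1 + P2) := by
    have e1 : (n:ℝ) * (Helper2.Kc κ n * ((n:ℝ) * (P1 + P2)))
        = (n:ℝ)^2 * Helper2.Kc κ n * (P1 + P2) := by ring
    have h5 : ∑ i : Fin n, blockNorm n d e i ^ ((1:ℝ) / (2 * (i:ℕ) + 1))
        = P2 - |t - σ| ^ ((1:ℝ)/2) := by rw [← hP2eq]; ring
    rw [h5, e1] at hsum
    linarith
  calc |t - s| ^ ((1:ℝ)/2)
      + ∑ i : Fin n, blockNorm n d (Δ + e) i ^ ((1:ℝ) / (2 * (i:ℕ) + 1))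
      ≤ P1 + P2 + (n:ℝ)^2 * Helper2.Kc κ n * (P1 + P2) := target
    _ ≤ ((n:ℝ)^2 * Helper2.Kc κ n + 2) * (P1 + P2) := by nlinarith
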